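/- arXiv:1102.0818 — 3 statements merged into one kernel-verified Lean document; each statement's English description precedes it below -/
import Mathlib

section
/- Discrete uniform stick breaking on n generates the same distribution on partitions of n as the cycle lengths of a uniformly random permutation of {1,...,n}: for any partition n_1 ≥ ... ≥ n_k of n with a_j = #{i : n_i = j}, the probability that the ranked stick-breaking lengths equal (n_1,...,n_k) is ∏_{j=1}^n 1/(j^{a_j} · a_j!). -/
open Finset MeasureTheory

namespace SBAux

noncomputable def G (m : Multiset ℕ) : ENNReal :=
  ∏ j ∈ m.toFinset, (((j : ENNReal) ^ (m.count j)) * (Nat.factorial (m.count j) : ENNReal))⁻¹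

lemma term_one_le {j a : ℕ} (hj : 1 ≤ j) :
    (1 : ENNReal) ≤ (j : ENNReal) ^ a * (Nat.factorial a : ENNReal) := by
  have h1 : (1 : ENNReal) ≤ (j : ENNReal) ^ a := one_le_pow_of_one_le' (by exact_mod_cast hj) a
  have h2 : (1 : ENNReal) ≤ (Nat.factorial a : ENNReal) := by
    exact_mod_cast Nat.one_le_iff_ne_zero.mpr (Nat.factorial_ne_zero a)
  calc (1:ENNReal) = 1 * 1 := (one_mul 1).symm
  _ ≤ _ := mul_le_mul' h1 h2

lemma term_ne_zero {j a : ℕ} (hj : 1 ≤ j) :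
    ((j : ENNReal) ^ a * (Nat.factorial a : ENNReal)) ≠ 0 :=
  fun h => by simpa [h] using term_one_le (a := a) hj

lemma term_ne_top {j a : ℕ} :
    ((j : ENNReal) ^ a * (Nat.factorial a : ENNReal)) ≠ ⊤ :=
  ENNReal.mul_ne_top (by simp [ENNReal.pow_ne_top]) (by simp)

lemma G_le_one {m : Multiset ℕ} (h : ∀ j ∈ m, 1 ≤ j) : G m ≤ 1 := by
  refine Finset.prod_le_one (fun i _ => zero_le) (fun i hi => ?_)
  exact ENNReal.inv_le_one.mpr (term_one_le (h i (Multiset.mem_toFinset.mp hi)))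

lemma G_erase {m : Multiset ℕ} (hpos : ∀ j ∈ m, 1 ≤ j) {j : ℕ} (hj : j ∈ m) :
    G (m.erase j) = ((j : ENNReal) * (m.count j : ENNReal)) * G m := by
  classical
  have hj1 : 1 ≤ j := hpos j hj
  have hsub : (m.erase j).toFinset ⊆ m.toFinset := by
    intro x hx
    exact Multiset.mem_toFinset.mpr (Multiset.mem_of_mem_erase (Multiset.mem_toFinset.mp hx))
  have hstep : G (m.erase j) = ∏ i ∈ m.toFinset,
      (((i : ENNReal) ^ ((m.erase j).count i)) * (Nat.factorial ((m.erase j).count i) : ENNReal))⁻¹ := by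
    rw [G, Finset.prod_subset hsub]
    intro x _ hx
    have : (m.erase j).count x = 0 := by
      simpa [Multiset.count_eq_zero] using fun hmem => hx (Multiset.mem_toFinset.mpr hmem)
    simp [this]
  have hjtf : j ∈ m.toFinset := Multiset.mem_toFinset.mpr hj
  set a := m.count j with ha
  have ha1 : 1 ≤ a := Multiset.one_le_count_iff_mem.mpr hj
  -- split off the factor at j in both products
  rw [hstep, ← Finset.mul_prod_erase _ _ hjtf, G, ← Finset.mul_prod_erase _ _ hjtf]
  have hcount : ∀ i ∈ m.toFinset.erase j, (m.erase j).count i = m.count i := by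
    intro i hi
    exact Multiset.count_erase_of_ne (Finset.ne_of_mem_erase hi) m
  rw [Finset.prod_congr rfl (fun i hi => by rw [hcount i hi])]
  rw [Multiset.count_erase_self, ← ha]
  -- now prove ((j^(a-1)) * (a-1)!)⁻¹ = j * a * (j^a * a!)⁻¹
  obtain ⟨b, hb⟩ : ∃ b, a = b + 1 := ⟨a - 1, by omega⟩
  have key : (((j : ENNReal) ^ (a - 1)) * (Nat.factorial (a - 1) : ENNReal))⁻¹
      = (j : ENNReal) * (a : ENNReal) * (((j : ENNReal) ^ a) * (Nat.factorial a : ENNReal))⁻¹ := by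
    have hj0 : (j : ENNReal) ≠ 0 := by exact_mod_cast Nat.one_le_iff_ne_zero.mp hj1
    have ha0 : (a : ENNReal) ≠ 0 := by exact_mod_cast Nat.one_le_iff_ne_zero.mp ha1
    have hfac : (j : ENNReal) ^ a * (Nat.factorial a : ENNReal)
        = ((j : ENNReal) ^ (a - 1) * (Nat.factorial (a - 1) : ENNReal)) * ((j : ENNReal) * a) := by
      rw [hb]
      simp only [Nat.add_sub_cancel, pow_succ, Nat.factorial_succ]
      push_cast
      ring
    rw [hfac]
    rw [ENNReal.mul_inv (Or.inl (term_ne_zero hj1)) (Or.inl term_ne_top)]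
    rw [ENNReal.mul_inv (Or.inl hj0) (Or.inr ha0)]
    rw [show ∀ X : ENNReal, (j:ENNReal) * a * (X * ((j:ENNReal)⁻¹ * (a:ENNReal)⁻¹))
        = ((j:ENNReal) * (j:ENNReal)⁻¹) * (((a:ENNReal)) * (a:ENNReal)⁻¹) * X from fun X => by ring]
    rw [ENNReal.mul_inv_cancel hj0 (by simp)]
    rw [ENNReal.mul_inv_cancel ha0 (by simp)]
    rw [one_mul, one_mul]
  rw [key]; ring


lemma sum_count_mul (m : Multiset ℕ) : ∑ j ∈ m.toFinset, m.count j * j = m.sum := by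
  classical
  conv_rhs => rw [show m = Multiset.map id m by simp]
  rw [Finset.sum_multiset_map_count]
  simp [smul_eq_mul]

lemma sum_G_erase {m : Multiset ℕ} (hpos : ∀ j ∈ m, 1 ≤ j) :
    ∑ j ∈ m.toFinset, G (m.erase j) = (m.sum : ENNReal) * G m := by
  classical
  calc ∑ j ∈ m.toFinset, G (m.erase j)
      = ∑ j ∈ m.toFinset, ((j : ENNReal) * (m.count j : ENNReal)) * G m := by
        refine Finset.sum_congr rfl (fun j hj => G_erase hpos (Multiset.mem_toFinset.mp hj))
    _ = (∑ j ∈ m.toFinset, ((j : ENNReal) * (m.count j : ENNReal))) * G m := by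
        rw [Finset.sum_mul]
    _ = (m.sum : ENNReal) * G m := by
        congr 1
        rw [← sum_count_mul m]
        push_cast
        exact Finset.sum_congr rfl (fun j _ => by ring)

lemma list_sum_range (f : ℕ → ℕ) (r : ℕ) :
    ((List.range r).map f).sum = ∑ i ∈ Finset.range r, f i := by
  induction r with
  | zero => simp
  | succ r ih => rw [List.range_succ, Finset.sum_range_succ, ← ih]; simp

lemma cons_eq_iff {a : ℕ} {t m : Multiset ℕ} : a ::ₘ t = m ↔ a ∈ m ∧ t = m.erase a := by
  constructor
  · rintro rfl
    exact ⟨Multiset.mem_cons_self a t, (Multiset.erase_cons_head a t).symm⟩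
  · rintro ⟨h1, rfl⟩
    exact Multiset.cons_erase h1

lemma le_msum {m : Multiset ℕ} {j : ℕ} (hj : j ∈ m) : j ≤ m.sum := by
  obtain ⟨t, rfl⟩ := Multiset.exists_cons_of_mem hj
  simp


section Meas

variable {Ω : Type*} (M : ℕ → Ω → ℕ)

def P (k : ℕ) (c : ℕ → ℕ) : Set Ω := {ω | ∀ i < k, M i ω = c i}

def E (k : ℕ) (c : ℕ → ℕ) (r : ℕ) (m' : Multiset ℕ) : Set Ω :=
  {ω | (∀ i < k, M i ω = c i) ∧
    (((List.range' k r).map (fun i => M i ω) : List ℕ) : Multiset ℕ) = m'}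

lemma P_succ (k : ℕ) (c : ℕ → ℕ) (j : ℕ) :
    P M (k+1) (Function.update c k j) = {ω | (∀ i < k, M i ω = c i) ∧ M k ω = j} := by
  ext ω
  simp only [P, Set.mem_setOf_eq]
  constructor
  · intro h
    refine ⟨fun i hi => ?_, ?_⟩
    · have := h i (by omega); rwa [Function.update_of_ne (by omega)] at this
    · have := h k (by omega); rwa [Function.update_self] at this
  · rintro ⟨h1, h2⟩ i hi
    rcases Nat.lt_succ_iff_lt_or_eq.mp hi with h | h
    · rw [Function.update_of_ne (by omega)]; exact h1 i h
    · subst h; rw [Function.update_self]; exact h2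

lemma E_subset_P (k : ℕ) (c : ℕ → ℕ) (r : ℕ) (m' : Multiset ℕ) :
    E M k c r m' ⊆ P M k c := fun _ h => h.1

lemma E_succ (k : ℕ) (c : ℕ → ℕ) (r : ℕ) (m' : Multiset ℕ) :
    E M k c (r+1) m' =
      ⋃ j ∈ m'.toFinset, E M (k+1) (Function.update c k j) r (m'.erase j) := by
  classical
  ext ω
  simp only [E, Set.mem_setOf_eq, Set.mem_iUnion, Multiset.mem_toFinset, exists_prop]
  have hrange : List.range' k (r+1) = k :: List.range' (k+1) r := List.range'_succ
  rw [hrange]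
  simp only [List.map_cons, ← Multiset.cons_coe, cons_eq_iff]
  constructor
  · rintro ⟨h1, hmem, htail⟩
    refine ⟨M k ω, hmem, ?_, htail⟩
    intro i hi
    rcases Nat.lt_succ_iff_lt_or_eq.mp hi with h | h
    · rw [Function.update_of_ne (by omega)]; exact h1 i h
    · subst h; rw [Function.update_self]
  · rintro ⟨j, hjm, h1, htail⟩
    have hk : M k ω = j := by
      have := h1 k (by omega); rwa [Function.update_self] at this
    refine ⟨fun i hi => ?_, ?_, ?_⟩
    · have := h1 i (by omega); rwa [Function.update_of_ne (by omega)] at this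
    · rw [hk]; exact hjm
    · rw [hk]; exact htail

lemma sum_update (k : ℕ) (c : ℕ → ℕ) (j : ℕ) :
    ∑ i ∈ Finset.range (k+1), Function.update c k j i = (∑ i ∈ Finset.range k, c i) + j := by
  rw [Finset.sum_range_succ, Function.update_self]
  congr 1
  refine Finset.sum_congr rfl (fun i hi => ?_)
  rw [Function.update_of_ne]
  have := Finset.mem_range.mp hi; omega


open MeasureTheory in
lemma key [MeasurableSpace Ω] (ℙ : Measure Ω) [IsProbabilityMeasure ℙ]
    (n : ℕ) (hn : 1 ≤ n)
    (hstep : ∀ k : ℕ, ∀ c : ℕ → ℕ, (∀ i < k, 1 ≤ c i) →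
      (∑ i ∈ Finset.range k, c i) < n → ∀ m : ℕ,
      ℙ {ω | (∀ i < k, M i ω = c i) ∧ M k ω = m}
        = (if 1 ≤ m ∧ m ≤ n - ∑ i ∈ Finset.range k, c i
            then ((n - ∑ i ∈ Finset.range k, c i : ℕ) : ENNReal)⁻¹ else 0)
          * ℙ {ω | ∀ i < k, M i ω = c i}) :
    ∀ (r : ℕ) (m' : Multiset ℕ) (k : ℕ) (c : ℕ → ℕ),
      Multiset.card m' = r → (∀ i < k, 1 ≤ c i) → (∀ j ∈ m', 1 ≤ j) →
      (∑ i ∈ Finset.range k, c i) + m'.sum = n →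
      ℙ (E M k c r m') = ℙ (P M k c) * G m' ∧
      ℙ (P M k c \ E M k c r m') + ℙ (P M k c) * G m' ≤ ℙ (P M k c) := by
  classical
  intro r
  induction r with
  | zero =>
    intro m' k c hcard hc hm' hsum
    have hm0 : m' = 0 := Multiset.card_eq_zero.mp hcard
    subst hm0
    have hE : E M k c 0 0 = P M k c := by
      ext ω; simp [E, P]
    rw [hE]
    simp [G]
  | succ r ih =>
    intro m' k c hcard hc hm' hsum
    have hm'ne : m' ≠ 0 := by
      intro h; rw [h] at hcard; simp at hcard
    obtain ⟨j0, hj0⟩ := Multiset.exists_mem_of_ne_zero hm'ne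
    have hT1 : 1 ≤ m'.sum := le_trans (hm' j0 hj0) (le_msum hj0)
    set T := m'.sum with hTdef
    have hsn : (∑ i ∈ Finset.range k, c i) < n := by omega
    have hnsT : n - (∑ i ∈ Finset.range k, c i) = T := by omega
    -- basic facts about each branch j ∈ m'.toFinset
    have hPj : ∀ j ∈ m'.toFinset,
        ℙ (P M (k+1) (Function.update c k j)) = (T : ENNReal)⁻¹ * ℙ (P M k c) := by
      intro j hj
      rw [P_succ]
      have hj' : j ∈ m' := Multiset.mem_toFinset.mp hj
      have h1j : 1 ≤ j := hm' j hj'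
      have hjT : j ≤ T := le_msum hj'
      have hst := hstep k c hc hsn j
      rw [hnsT] at hst
      rw [hst, if_pos ⟨h1j, hjT⟩]
      rfl
    have hPj0 : ∀ j : ℕ, j ∉ Finset.Icc 1 T →
        ℙ (P M (k+1) (Function.update c k j)) = 0 := by
      intro j hj
      rw [P_succ]
      have hst := hstep k c hc hsn j
      rw [hnsT] at hst
      rw [hst, if_neg (by simp only [Finset.mem_Icc] at hj; tauto), zero_mul]
    -- induction hypothesis for each branch
    have hIH : ∀ j ∈ m'.toFinset,
        ℙ (E M (k+1) (Function.update c k j) r (m'.erase j))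
          = ℙ (P M (k+1) (Function.update c k j)) * G (m'.erase j) ∧
        ℙ (P M (k+1) (Function.update c k j) \ E M (k+1) (Function.update c k j) r (m'.erase j))
          + ℙ (P M (k+1) (Function.update c k j)) * G (m'.erase j)
          ≤ ℙ (P M (k+1) (Function.update c k j)) := by
      intro j hj
      have hj' : j ∈ m' := Multiset.mem_toFinset.mp hj
      refine ih (m'.erase j) (k+1) (Function.update c k j) ?_ ?_ ?_ ?_
      · rw [Multiset.card_erase_of_mem hj', hcard]; rfl
      · intro i hi
        rcases Nat.lt_succ_iff_lt_or_eq.mp hi with h | h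
        · rw [Function.update_of_ne (by omega)]; exact hc i h
        · subst h; rw [Function.update_self]; exact hm' j hj'
      · intro x hx; exact hm' x (Multiset.mem_of_mem_erase hx)
      · rw [sum_update]
        have : j + (m'.erase j).sum = T := by
          rw [hTdef, ← Multiset.sum_cons, Multiset.cons_erase hj']
        omega
    -- the sum of branch measures
    have hGsum : ∑ j ∈ m'.toFinset, G (m'.erase j) = (T : ENNReal) * G m' := sum_G_erase hm'
    have hTn0 : (T : ENNReal) ≠ 0 := by exact_mod_cast Nat.one_le_iff_ne_zero.mp hT1
    have hTnt : (T : ENNReal) ≠ ⊤ := ENNReal.natCast_ne_top T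
    have hsumE : ∑ j ∈ m'.toFinset, ℙ (E M (k+1) (Function.update c k j) r (m'.erase j))
        = ℙ (P M k c) * G m' := by
      calc ∑ j ∈ m'.toFinset, ℙ (E M (k+1) (Function.update c k j) r (m'.erase j))
          = ∑ j ∈ m'.toFinset, (T : ENNReal)⁻¹ * ℙ (P M k c) * G (m'.erase j) := by
            refine Finset.sum_congr rfl (fun j hj => ?_)
            rw [(hIH j hj).1, hPj j hj]
        _ = (T : ENNReal)⁻¹ * ℙ (P M k c) * ∑ j ∈ m'.toFinset, G (m'.erase j) := by
            rw [Finset.mul_sum]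
        _ = ℙ (P M k c) * G m' := by
            rw [hGsum, show (T : ENNReal)⁻¹ * ℙ (P M k c) * ((T:ENNReal) * G m')
              = ((T:ENNReal)⁻¹ * T) * (ℙ (P M k c) * G m') from by ring,
              ENNReal.inv_mul_cancel hTn0 hTnt, one_mul]
    have hEdec := E_succ M k c r m'
    -- upper bound for ℙ E
    have hupper : ℙ (E M k c (r+1) m') ≤ ℙ (P M k c) * G m' := by
      rw [hEdec, ← hsumE]
      exact measure_biUnion_finset_le _ _
    -- the complement bound
    have hcompl : ℙ (P M k c \ E M k c (r+1) m') + ℙ (P M k c) * G m' ≤ ℙ (P M k c) := by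
      set C : ℕ → Set Ω := fun j =>
        if j ∈ m'.toFinset then
          P M (k+1) (Function.update c k j) \ E M (k+1) (Function.update c k j) r (m'.erase j)
        else P M (k+1) (Function.update c k j) with hC
      have hcover : P M k c \ E M k c (r+1) m' ⊆ ⋃ j, C j := by
        intro ω hω
        obtain ⟨hωP, hωE⟩ := hω
        have hωP' : ω ∈ P M (k+1) (Function.update c k (M k ω)) := by
          rw [P_succ]; exact ⟨hωP, rfl⟩
        refine Set.mem_iUnion.mpr ⟨M k ω, ?_⟩
        by_cases hmem : M k ω ∈ m'.toFinset
        · simp only [hC, if_pos hmem]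
          refine ⟨hωP', fun hωEj => hωE ?_⟩
          rw [hEdec]
          exact Set.mem_biUnion hmem hωEj
        · simp only [hC, if_neg hmem]; exact hωP'
      have hCle : ℙ (P M k c \ E M k c (r+1) m') ≤ ∑ j ∈ Finset.Icc 1 T, ℙ (C j) := by
        refine le_trans (measure_mono hcover) ?_
        refine le_trans (measure_iUnion_le C) ?_
        rw [tsum_eq_sum (s := Finset.Icc 1 T) ?_]
        intro j hj
        have hjm : j ∉ m'.toFinset := by
          intro hmem
          have hj' : j ∈ m' := Multiset.mem_toFinset.mp hmem
          exact hj (Finset.mem_Icc.mpr ⟨hm' j hj', le_msum hj'⟩)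
        simp only [hC, if_neg hjm]
        exact hPj0 j hj
      have htf_sub : m'.toFinset ⊆ Finset.Icc 1 T := by
        intro j hj
        have hj' : j ∈ m' := Multiset.mem_toFinset.mp hj
        exact Finset.mem_Icc.mpr ⟨hm' j hj', le_msum hj'⟩
      have hsplit : ∑ j ∈ Finset.Icc 1 T, ℙ (C j)
          = (∑ j ∈ Finset.Icc 1 T \ m'.toFinset, ℙ (C j)) + ∑ j ∈ m'.toFinset, ℙ (C j) :=
        (Finset.sum_sdiff htf_sub).symm
      calc ℙ (P M k c \ E M k c (r+1) m') + ℙ (P M k c) * G m'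
          ≤ ((∑ j ∈ Finset.Icc 1 T \ m'.toFinset, ℙ (C j)) + ∑ j ∈ m'.toFinset, ℙ (C j))
            + ∑ j ∈ m'.toFinset, ℙ (P M (k+1) (Function.update c k j)) * G (m'.erase j) := by
            rw [← hsplit]
            refine add_le_add (hCle) (le_of_eq ?_)
            rw [← hsumE]
            refine Finset.sum_congr rfl (fun j hj => (hIH j hj).1)
        _ = (∑ j ∈ Finset.Icc 1 T \ m'.toFinset, ℙ (C j))
            + ∑ j ∈ m'.toFinset, (ℙ (C j) + ℙ (P M (k+1) (Function.update c k j)) * G (m'.erase j)) := by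
            rw [Finset.sum_add_distrib]; ring
        _ ≤ (∑ j ∈ Finset.Icc 1 T \ m'.toFinset, ℙ (P M (k+1) (Function.update c k j)))
            + ∑ j ∈ m'.toFinset, ℙ (P M (k+1) (Function.update c k j)) := by
            refine add_le_add (Finset.sum_le_sum (fun j hj => ?_)) (Finset.sum_le_sum (fun j hj => ?_))
            · simp only [hC, if_neg (Finset.mem_sdiff.mp hj).2]
              exact le_rfl
            · simp only [hC, if_pos hj]
              exact (hIH j hj).2
        _ = ∑ j ∈ Finset.Icc 1 T, ℙ (P M (k+1) (Function.update c k j)) :=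
            Finset.sum_sdiff htf_sub
        _ = ∑ j ∈ Finset.Icc 1 T, (T : ENNReal)⁻¹ * ℙ (P M k c) := by
            refine Finset.sum_congr rfl (fun j hj => ?_)
            have hj' := Finset.mem_Icc.mp hj
            rw [P_succ]
            have hst := hstep k c hc hsn j
            rw [hnsT] at hst
            rw [hst, if_pos ⟨hj'.1, hj'.2⟩]
            rfl
        _ = ℙ (P M k c) := by
            rw [Finset.sum_const, Nat.card_Icc]
            simp only [Nat.add_sub_cancel, nsmul_eq_mul]
            rw [show (T : ENNReal) * ((T : ENNReal)⁻¹ * ℙ (P M k c))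
              = ((T:ENNReal) * (T:ENNReal)⁻¹) * ℙ (P M k c) from by ring,
              ENNReal.mul_inv_cancel hTn0 hTnt, one_mul]
    -- lower bound
    have hlower : ℙ (P M k c) * G m' ≤ ℙ (E M k c (r+1) m') := by
      have hPle : ℙ (P M k c) ≤ ℙ (E M k c (r+1) m') + ℙ (P M k c \ E M k c (r+1) m') := by
        refine le_trans (measure_mono ?_) (measure_union_le _ _)
        intro ω hω
        by_cases h : ω ∈ E M k c (r+1) m'
        · exact Or.inl h
        · exact Or.inr ⟨hω, h⟩
      have h2 : ℙ (P M k c \ E M k c (r+1) m') + ℙ (P M k c) * G m'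
          ≤ ℙ (P M k c \ E M k c (r+1) m') + ℙ (E M k c (r+1) m') := by
        calc _ ≤ ℙ (P M k c) := hcompl
          _ ≤ _ := hPle.trans_eq (add_comm _ _)
      exact (ENNReal.add_le_add_iff_left (measure_ne_top ℙ _)).mp h2
    exact ⟨le_antisymm hupper hlower, hcompl⟩


lemma final_set_eq (n : ℕ) (hn : 1 ≤ n) (m : Multiset ℕ) (hmsum : m.sum = n)
    (hmpos : ∀ j ∈ m, 1 ≤ j) :
    {ω | (((List.range (sInf {j | ∑ i ∈ Finset.range j, M i ω = n})).map
              (fun i => M i ω) : List ℕ) : Multiset ℕ) = m}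
      = E M 0 (fun _ => 0) (Multiset.card m) m := by
  ext ω
  simp only [E, Set.mem_setOf_eq, Nat.not_lt_zero, IsEmpty.forall_iff, forall_const, true_and,
    ← List.range_eq_range']
  constructor
  · intro h
    have hK : sInf {j | ∑ i ∈ Finset.range j, M i ω = n} = Multiset.card m := by
      have := congrArg Multiset.card h
      simpa using this
    rw [← hK]
    exact h
  · intro h
    set r := Multiset.card m with hr
    have hsum_r : ∑ i ∈ Finset.range r, M i ω = n := by
      have h1 : ((List.range r).map (fun i => M i ω)).sum = m.sum := by
        rw [← Multiset.sum_coe, h]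
      rw [list_sum_range] at h1
      omega
    have hpos : ∀ j, j < r → 1 ≤ M j ω := by
      intro j hj
      refine hmpos _ ?_
      rw [← h]
      exact Multiset.mem_coe.mpr (List.mem_map.mpr ⟨j, List.mem_range.mpr hj, rfl⟩)
    have hlt : ∀ j, j < r → ∑ i ∈ Finset.range j, M i ω < n := by
      intro j hj
      have hsplit : (∑ i ∈ Finset.Ico 0 j, M i ω) + ∑ i ∈ Finset.Ico j r, M i ω
          = ∑ i ∈ Finset.Ico 0 r, M i ω :=
        Finset.sum_Ico_consecutive _ (Nat.zero_le j) (le_of_lt hj)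
      rw [← Finset.range_eq_Ico, ← Finset.range_eq_Ico] at hsplit
      have hge : M j ω ≤ ∑ i ∈ Finset.Ico j r, M i ω :=
        Finset.single_le_sum (f := fun i => M i ω) (fun i _ => Nat.zero_le _)
          (Finset.mem_Ico.mpr ⟨le_refl j, hj⟩)
      have := hpos j hj
      omega
    have hmemS : r ∈ {j | ∑ i ∈ Finset.range j, M i ω = n} := hsum_r
    have hK : sInf {j | ∑ i ∈ Finset.range j, M i ω = n} = r := by
      have h1 : sInf {j | ∑ i ∈ Finset.range j, M i ω = n} ≤ r := Nat.sInf_le hmemS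
      have h2 : sInf {j | ∑ i ∈ Finset.range j, M i ω = n}
          ∈ {j | ∑ i ∈ Finset.range j, M i ω = n} := Nat.sInf_mem ⟨r, hmemS⟩
      rcases Nat.lt_or_ge (sInf {j | ∑ i ∈ Finset.range j, M i ω = n}) r with hcase | hcase
      · exact absurd h2 (Nat.ne_of_lt (hlt _ hcase))
      · omega
    rw [hK]
    exact h

end Meas

end SBAux

/-- Discrete uniform stick breaking on `n` generates the same distribution on
partitions of `n` as the cycle lengths of a uniform random permutation of
`{1, …, n}`: for a partition of `n` with `a_j` parts equal to `j`, the probability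
that the multiset of stick-breaking pieces equals this partition is
`∏_{j=1}^n 1/(j^{a_j} a_j!)`.

The stick-breaking dynamics are encoded by `hstep`: conditionally on any prefix of
pieces with sum `< n`, the next piece is uniform on `{1, …, n - (sum so far)}`.
The process stops at `K ω`, the first index where the partial sums reach `n`. -/
theorem discrete_stick_breaking_partition_prob
    {Ω : Type*} [MeasurableSpace Ω] (ℙ : Measure Ω) [IsProbabilityMeasure ℙ]
    (n : ℕ) (hn : 1 ≤ n) (M : ℕ → Ω → ℕ)
    (hstep : ∀ k : ℕ, ∀ c : ℕ → ℕ, (∀ i < k, 1 ≤ c i) →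
      (∑ i ∈ Finset.range k, c i) < n → ∀ m : ℕ,
      ℙ {ω | (∀ i < k, M i ω = c i) ∧ M k ω = m}
        = (if 1 ≤ m ∧ m ≤ n - ∑ i ∈ Finset.range k, c i
            then ((n - ∑ i ∈ Finset.range k, c i : ℕ) : ENNReal)⁻¹ else 0)
          * ℙ {ω | ∀ i < k, M i ω = c i})
    (m : Multiset ℕ) (hmsum : m.sum = n) (hmpos : ∀ j ∈ m, 1 ≤ j) :
    ℙ {ω | (((List.range (sInf {j | ∑ i ∈ Finset.range j, M i ω = n})).map
              (fun i => M i ω) : List ℕ) : Multiset ℕ) = m}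
      = ∏ j ∈ Finset.Icc 1 n,
          (((j : ENNReal) ^ (m.count j)) * (Nat.factorial (m.count j) : ENNReal))⁻¹ := by
  classical
  rw [SBAux.final_set_eq M n hn m hmsum hmpos]
  have hkey := (SBAux.key M ℙ n hn hstep (Multiset.card m) m 0 (fun _ => 0) rfl
    (fun i hi => absurd hi (Nat.not_lt_zero i)) hmpos (by simpa using hmsum)).1
  rw [hkey]
  have hP : SBAux.P M 0 (fun _ => 0) = Set.univ := by
    ext ω; simp [SBAux.P]
  rw [hP, measure_univ, one_mul, SBAux.G]
  refine Finset.prod_subset ?_ ?_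
  · intro j hj
    have hj' : j ∈ m := Multiset.mem_toFinset.mp hj
    refine Finset.mem_Icc.mpr ⟨hmpos j hj', ?_⟩
    rw [← hmsum]
    exact SBAux.le_msum hj'
  · intro j _ hj
    have : m.count j = 0 := Multiset.count_eq_zero_of_notMem
      (fun hmem => hj (Multiset.mem_toFinset.mpr hmem))
    simp [this]
end

section
/- Let x_1,...,x_n be real numbers with no two subsets having equal arithmetic means, and fix 1 ≤ u ≤ n. The '3214' transformation, which maps a permutation-path of the x_i together with the index u to the rearranged path (segment on [u,d], then [g,u], then [0,g], then [d,n], where [g,d] is the face of the convex minorant straddling u) together with the value d - g, is a bijection from {1,...,n} × {paths from permutations of x_1,...,x_n} to itself. -/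
open Finset

/-- The walk of a permutation `σ` of the increments `x_1, …, x_n`:
`walk x σ j = x_{σ(1)} + ⋯ + x_{σ(j)}`. -/
noncomputable def permWalk {n : ℕ} (x : Fin n → ℝ) (σ : Equiv.Perm (Fin n)) (j : ℕ) : ℝ :=
  ∑ i ∈ Finset.univ.filter (fun i : Fin n => (i : ℕ) < j), x (σ i)

namespace Aux3214
variable {n : ℕ} (x : Fin n → ℝ)
def blk (n a b : ℕ) : Finset (Fin n) := univ.filter fun i => a ≤ (i : ℕ) ∧ (i : ℕ) < b
lemma permWalk_block (σ : Equiv.Perm (Fin n)) {a b : ℕ} (hab : a ≤ b) :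
    permWalk x σ b = permWalk x σ a + ∑ i ∈ blk n a b, x (σ i) := by
  have hsplit : univ.filter (fun i : Fin n => (i : ℕ) < b)
      = univ.filter (fun i : Fin n => (i : ℕ) < a) ∪ blk n a b := by
    ext i; simp [blk]; omega
  have hdisj : Disjoint (univ.filter (fun i : Fin n => (i : ℕ) < a)) (blk n a b) := by
    simp only [Finset.disjoint_left, mem_filter, mem_univ, true_and, blk]
    intro i h1 h2; omega
  rw [permWalk, permWalk, hsplit, sum_union hdisj]
lemma blk_card {a b : ℕ} (hb : b ≤ n) : (blk n a b).card = b - a := by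
  rw [← Finset.card_image_of_injective (blk n a b) Fin.val_injective]
  have : (blk n a b).image Fin.val = Finset.Ico a b := by
    ext k
    simp only [mem_image, blk, mem_filter, mem_univ, true_and, mem_Ico]
    constructor
    · rintro ⟨i, hi, rfl⟩; exact hi
    · rintro ⟨h1, h2⟩; exact ⟨⟨k, lt_of_lt_of_le h2 hb⟩, ⟨h1, h2⟩, rfl⟩
  rw [this, Nat.card_Ico]
lemma permWalk_succ (σ : Equiv.Perm (Fin n)) {j : ℕ} (hj : j < n) :
    permWalk x σ (j + 1) = permWalk x σ j + x (σ ⟨j, hj⟩) := by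
  rw [permWalk_block x σ (Nat.le_succ j)]
  congr 1
  have : blk n j (j + 1) = {⟨j, hj⟩} := by
    ext i; simp [blk, Fin.ext_iff]; omega
  rw [this, sum_singleton]
lemma permWalk_large (σ : Equiv.Perm (Fin n)) {j : ℕ} (hj : n ≤ j) :
    permWalk x σ j = ∑ i, x i := by
  rw [permWalk]
  have : univ.filter (fun i : Fin n => (i : ℕ) < j) = univ := by
    ext i; simp; exact lt_of_lt_of_le i.isLt hj
  rw [this]
  exact Equiv.sum_comp σ x
lemma mean_eq (σ : Equiv.Perm (Fin n)) {a b : ℕ} (hab : a ≤ b) (hb : b ≤ n) :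
    (∑ i ∈ (blk n a b).image σ, x i) / (((blk n a b).image σ).card : ℝ)
      = (permWalk x σ b - permWalk x σ a) / ((b : ℝ) - a) := by
  rw [Finset.sum_image (fun i _ j _ h => σ.injective h),
    Finset.card_image_of_injective _ σ.injective, blk_card hb,
    permWalk_block x σ hab]
  push_cast [Nat.cast_sub hab]
  ring_nf
lemma strict_chord
    (hties : ∀ A B : Finset (Fin n), A.Nonempty → B.Nonempty → A ≠ B →
      (∑ i ∈ A, x i) / (A.card : ℝ) ≠ (∑ i ∈ B, x i) / (B.card : ℝ))
    (σ : Equiv.Perm (Fin n)) {g d : ℕ} (hgd : g < d) (hdn : d ≤ n)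
    (hch : ∀ j ≤ n, permWalk x σ g
        + (((j : ℝ) - g) / ((d : ℝ) - g)) * (permWalk x σ d - permWalk x σ g)
      ≤ permWalk x σ j) :
    ∀ j, j ≤ n → j ≠ g → j ≠ d →
      permWalk x σ g + (((j : ℝ) - g) / ((d : ℝ) - g)) * (permWalk x σ d - permWalk x σ g)
        < permWalk x σ j := by
  intro j hj hjg hjd
  refine lt_of_le_of_ne (hch j hj) fun heq => ?_
  have hD : (0:ℝ) < (d : ℝ) - g := by
    exact sub_pos.mpr (by exact_mod_cast hgd)
  have hBne : ((blk n g d).image σ).Nonempty := by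
    rw [Finset.image_nonempty, ← Finset.card_pos, blk_card hdn]; omega
  rcases lt_or_gt_of_ne hjg with hlt | hgt
  · have hAne : ((blk n j g).image σ).Nonempty := by
      rw [Finset.image_nonempty, ← Finset.card_pos, blk_card (le_of_lt (lt_of_lt_of_le hgd hdn))]
      omega
    have hAB : (blk n j g).image σ ≠ (blk n g d).image σ := by
      intro h
      have hdisj : Disjoint ((blk n j g).image σ) ((blk n g d).image σ) := by
        rw [Finset.disjoint_image σ.injective]
        simp only [Finset.disjoint_left, blk, mem_filter, mem_univ, true_and]
        intro i h1 h2; omega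
      rw [h] at hdisj
      exact hBne.ne_empty (by simpa using hdisj)
    refine hties _ _ hAne hBne hAB ?_
    rw [mean_eq x σ hlt.le (le_of_lt (lt_of_lt_of_le hgd hdn)),
      mean_eq x σ hgd.le hdn]
    have hG : (0:ℝ) < (g : ℝ) - j := sub_pos.mpr (by exact_mod_cast hlt)
    rw [div_eq_div_iff hG.ne' hD.ne']
    have heq' := heq
    field_simp at heq'
    linear_combination heq'
  · have hAne : ((blk n g j).image σ).Nonempty := by
      rw [Finset.image_nonempty, ← Finset.card_pos, blk_card hj]; omega
    have hAB : (blk n g j).image σ ≠ (blk n g d).image σ := by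
      intro h
      have := congrArg Finset.card h
      rw [Finset.card_image_of_injective _ σ.injective,
        Finset.card_image_of_injective _ σ.injective, blk_card hj, blk_card hdn] at this
      omega
    refine hties _ _ hAne hBne hAB ?_
    rw [mean_eq x σ hgt.le hj, mean_eq x σ hgd.le hdn]
    have hG : (0:ℝ) < (j : ℝ) - g := sub_pos.mpr (by exact_mod_cast hgt)
    rw [div_eq_div_iff hG.ne' hD.ne']
    have heq' := heq
    field_simp at heq'
    linear_combination -heq'

lemma tau_m (σ τ : Equiv.Perm (Fin n)) {g d u : ℕ} (hgu : g < u) (hud : u ≤ d)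
    (h6 : ∀ j ≤ u - g, permWalk x τ (d - u + j)
      = (permWalk x σ d - permWalk x σ u) + (permWalk x σ (g + j) - permWalk x σ g)) :
    permWalk x τ (d - g) = permWalk x σ d - permWalk x σ g := by
  have h := h6 (u - g) le_rfl
  have e1 : d - u + (u - g) = d - g := by omega
  have e2 : g + (u - g) = u := by omega
  rw [e1, e2] at h
  rw [h]; ring

lemma key
    (hties : ∀ A B : Finset (Fin n), A.Nonempty → B.Nonempty → A ≠ B →
      (∑ i ∈ A, x i) / (A.card : ℝ) ≠ (∑ i ∈ B, x i) / (B.card : ℝ))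
    (σ τ : Equiv.Perm (Fin n)) (m g d u : ℕ)
    (hm : m = d - g) (hgu : g < u) (hud : u ≤ d) (hdn : d ≤ n)
    (hch : ∀ j ≤ n, permWalk x σ g
        + (((j : ℝ) - g) / ((d : ℝ) - g)) * (permWalk x σ d - permWalk x σ g)
      ≤ permWalk x σ j)
    (h5 : ∀ j ≤ d - u, permWalk x τ j = permWalk x σ (u + j) - permWalk x σ u)
    (h6 : ∀ j ≤ u - g, permWalk x τ (d - u + j)
      = (permWalk x σ d - permWalk x σ u) + (permWalk x σ (g + j) - permWalk x σ g))
    (h7 : ∀ j ≤ g, permWalk x τ (d - g + j)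
      = (permWalk x σ d - permWalk x σ g) + permWalk x σ j)
    (h8 : ∀ j ≤ n - d, permWalk x τ (d + j) = permWalk x σ (d + j)) :
    (∀ j, m ≤ j → j ≤ n → j ≠ d →
      permWalk x τ d - permWalk x τ m / (m : ℝ) * (d : ℝ)
        < permWalk x τ j - permWalk x τ m / (m : ℝ) * (j : ℝ)) ∧
    (∀ j, j < m → j ≠ d - u →
      permWalk x τ (d - u) - permWalk x τ m / (m : ℝ) * ((d - u : ℕ) : ℝ)
        < permWalk x τ j - permWalk x τ m / (m : ℝ) * (j : ℝ)) := by
  have hgd : g < d := lt_of_lt_of_le hgu hud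
  have hm1 : 1 ≤ m := by omega
  have hmne : ((m : ℕ) : ℝ) ≠ 0 := Nat.cast_ne_zero.mpr (by omega)
  have hcast : ((m : ℕ) : ℝ) = (d : ℝ) - g := by rw [hm, Nat.cast_sub hgd.le]
  have hwm : permWalk x τ m = permWalk x σ d - permWalk x σ g := by
    rw [hm]; exact tau_m x σ τ hgu hud h6
  set ρ := permWalk x τ m / (m : ℝ) with hρdef
  have hsd : permWalk x σ d - permWalk x σ g = ρ * ((d : ℝ) - g) := by
    rw [hρdef, hwm, ← hcast]
    field_simp
  have hpos : ∀ j, j ≤ n → j ≠ g → j ≠ d →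
      permWalk x σ g + ρ * ((j : ℝ) - g) < permWalk x σ j := by
    intro j hj h1 h2
    have hstr := strict_chord x hties σ hgd hdn hch j hj h1 h2
    have hdg0 : ((d : ℝ) - g) ≠ 0 := by rw [← hcast]; exact hmne
    have hre : ((j : ℝ) - g) / ((d : ℝ) - g) * (permWalk x σ d - permWalk x σ g)
        = ρ * ((j : ℝ) - g) := by
      rw [hsd]; field_simp
    linarith [hre ▸ hstr]
  have hwd : permWalk x τ d = permWalk x σ d := by
    have h := h7 g le_rfl
    have e : d - g + g = d := by omega
    rw [e] at h; rw [h]; ring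
  constructor
  · intro j hmj hjn hjd
    rcases le_or_gt j d with hjle | hjgt
    · have hj'g : j - m ≤ g := by omega
      have h := h7 (j - m) hj'g
      have e : d - g + (j - m) = j := by omega
      rw [e] at h
      have hp := hpos (j - m) (by omega) (by omega) (by omega)
      have hes : ρ * (j : ℝ) = ρ * ((d : ℝ) - g) + ρ * ((j - m : ℕ) : ℝ) := by
        have ej : (j : ℝ) = ((m : ℕ) : ℝ) + ((j - m : ℕ) : ℝ) := by
          have : j = m + (j - m) := by omega
          exact_mod_cast congrArg (Nat.cast (R := ℝ)) this
        rw [ej, hcast]; ring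
      have he2 : ρ * (((j - m : ℕ) : ℝ) - g) = ρ * ((j - m : ℕ) : ℝ) - ρ * g := by ring
      have he3 : ρ * ((d : ℝ) - g) = ρ * (d : ℝ) - ρ * g := by ring
      rw [hwd, h]
      linarith [hp, hsd, hes, he2, he3]
    · have h := h8 (j - d) (by omega)
      have e : d + (j - d) = j := by omega
      rw [e] at h
      have hp := hpos j hjn (by omega) hjd
      have he1 : ρ * ((j : ℝ) - g) = ρ * (j : ℝ) - ρ * g := by ring
      have he3 : ρ * ((d : ℝ) - g) = ρ * (d : ℝ) - ρ * g := by ring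
      rw [hwd, h]
      linarith [hp, hsd, he1, he3]
  · intro j hjm hjne
    have hwdu : permWalk x τ (d - u) = permWalk x σ d - permWalk x σ u := by
      have h := h5 (d - u) le_rfl
      have e : u + (d - u) = d := by omega
      rw [e] at h; exact h
    have hcastdu : ((d - u : ℕ) : ℝ) = (d : ℝ) - u := Nat.cast_sub hud
    rcases le_or_gt j (d - u) with hjle | hjgt
    · have h := h5 j hjle
      have hp := hpos (u + j) (by omega) (by omega) (by omega)
      have e2 : ((u + j : ℕ) : ℝ) = (u : ℝ) + (j : ℝ) := by push_cast; ring
      have e3 : ρ * (((u + j : ℕ) : ℝ) - g) = ρ * (u : ℝ) + ρ * (j : ℝ) - ρ * g := by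
        rw [e2]; ring
      have e1 : ρ * ((d - u : ℕ) : ℝ) = ρ * (d : ℝ) - ρ * (u : ℝ) := by
        rw [hcastdu]; ring
      have e4 : ρ * ((d : ℝ) - g) = ρ * (d : ℝ) - ρ * g := by ring
      rw [h, hwdu]
      linarith [hp, hsd, e1, e3, e4]
    · have hb : j - (d - u) ≤ u - g := by omega
      have h := h6 (j - (d - u)) hb
      have e : d - u + (j - (d - u)) = j := by omega
      rw [e] at h
      have hp := hpos (g + (j - (d - u))) (by omega) (by omega) (by omega)
      have ej : ρ * (j : ℝ) = ρ * ((d - u : ℕ) : ℝ) + ρ * ((j - (d - u) : ℕ) : ℝ) := by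
        have : (j : ℝ) = ((d - u : ℕ) : ℝ) + ((j - (d - u) : ℕ) : ℝ) := by
          have h' : j = (d - u) + (j - (d - u)) := by omega
          exact_mod_cast congrArg (Nat.cast (R := ℝ)) h'
        rw [this]; ring
      have e5 : ρ * (((g + (j - (d - u)) : ℕ) : ℝ) - g)
          = ρ * ((j - (d - u) : ℕ) : ℝ) := by push_cast; ring
      rw [h, hwdu]
      linarith [hp, e5, ej]
end Aux3214

open Aux3214 in
/-- The `3214` transformation is a bijection.  Let `x_1, …, x_n` have no two nonempty
subsets with equal arithmetic means, and let `T` map a pair `(u, σ)`, where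
`1 ≤ u ≤ n` and `σ` is a permutation of the increments, to the pair `(d - g, σ')`:
here `[g, d]` is the face of the convex minorant of the walk of `σ` straddling `u`
(characterized by `g < u ≤ d` and the chord from `(g, s_g)` to `(d, s_d)` lying below
the whole walk), and the walk of `σ'` is obtained by concatenating the segments of the
walk of `σ` over `[u,d]`, `[g,u]`, `[0,g]`, `[d,n]` in this order.  Then `T` is a
bijection of `{1, …, n} × {permutations}`. -/
theorem transform_3214_bijective (n : ℕ) (hn : 1 ≤ n) (x : Fin n → ℝ)
    (hties : ∀ A B : Finset (Fin n), A.Nonempty → B.Nonempty → A ≠ B →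
      (∑ i ∈ A, x i) / (A.card : ℝ) ≠ (∑ i ∈ B, x i) / (B.card : ℝ))
    (T : Set.Icc 1 n × Equiv.Perm (Fin n) → Set.Icc 1 n × Equiv.Perm (Fin n))
    (hT : ∀ u : Set.Icc 1 n, ∀ σ : Equiv.Perm (Fin n), ∃ g d : ℕ,
      g < (u : ℕ) ∧ (u : ℕ) ≤ d ∧ d ≤ n ∧
      (∀ j ≤ n, permWalk x σ g
          + (((j : ℝ) - g) / ((d : ℝ) - g)) * (permWalk x σ d - permWalk x σ g)
        ≤ permWalk x σ j) ∧
      (((T (u, σ)).1 : ℕ) = d - g) ∧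
      (∀ j ≤ d - (u : ℕ), permWalk x (T (u, σ)).2 j
        = permWalk x σ ((u : ℕ) + j) - permWalk x σ u) ∧
      (∀ j ≤ (u : ℕ) - g, permWalk x (T (u, σ)).2 (d - (u : ℕ) + j)
        = (permWalk x σ d - permWalk x σ u) + (permWalk x σ (g + j) - permWalk x σ g)) ∧
      (∀ j ≤ g, permWalk x (T (u, σ)).2 (d - g + j)
        = (permWalk x σ d - permWalk x σ g) + permWalk x σ j) ∧
      (∀ j ≤ n - d, permWalk x (T (u, σ)).2 (d + j) = permWalk x σ (d + j))) :
    Function.Bijective T := by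
  classical
  have hx : Function.Injective x := by
    intro i j h
    by_contra hne
    refine hties {i} {j} (Finset.singleton_nonempty i) (Finset.singleton_nonempty j)
      (fun hs => hne (Finset.singleton_injective hs)) ?_
    simp [h]
  have hfin : Finite (Set.Icc 1 n) := Set.Finite.to_subtype (Set.finite_Icc 1 n)
  rw [← Finite.injective_iff_bijective]
  rintro ⟨u, σ⟩ ⟨u', σ'⟩ hpq
  obtain ⟨g, d, hgu, hud, hdn, hch, hval, h5, h6, h7, h8⟩ := hT u σ
  obtain ⟨g', d', hgu', hud', hdn', hch', hval', h5', h6', h7', h8'⟩ := hT u' σ'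
  rw [hpq] at hval h5 h6 h7 h8
  set τ := (T (u', σ')).2 with hτ
  set m := d - g with hm
  have hm' : m = d' - g' := hval.symm.trans hval'
  have hgd : g < d := lt_of_lt_of_le hgu hud
  have hgd' : g' < d' := lt_of_lt_of_le hgu' hud'
  obtain ⟨K1, K2⟩ := key x hties σ τ m g d (u : ℕ) hm hgu hud hdn hch h5 h6 h7 h8
  obtain ⟨K1', K2'⟩ := key x hties σ' τ m g' d' (u' : ℕ) hm' hgu' hud' hdn' hch' h5' h6' h7' h8'
  have hdd : d = d' := by
    by_contra hne
    have A := K1 d' (by omega) hdn' (fun h => hne h.symm)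
    have B := K1' d (by omega) hdn hne
    linarith
  subst hdd
  have hgg : g = g' := by omega
  subst hgg
  have huv : (u : ℕ) = (u' : ℕ) := by
    by_contra hne
    have A := K2 (d - (u' : ℕ)) (by omega) (by omega)
    have B := K2' (d - (u : ℕ)) (by omega) (by omega)
    linarith
  rw [← huv] at h5' h6'
  -- walks agree
  have A6 : permWalk x τ (d - g) = permWalk x σ d - permWalk x σ g := tau_m x σ τ hgu hud h6
  have A6' : permWalk x τ (d - g) = permWalk x σ' d - permWalk x σ' g := tau_m x σ' τ hgu hud h6'
  have e1 : ∀ j ≤ g, permWalk x σ j = permWalk x σ' j := by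
    intro j hj
    have q := h7 j hj
    have q' := h7' j hj
    rw [A6.symm] at q
    rw [A6'.symm] at q'
    linarith
  have esg : permWalk x σ g = permWalk x σ' g := e1 g le_rfl
  have esd : permWalk x σ d = permWalk x σ' d := by
    have q := h7 g le_rfl
    have q' := h7' g le_rfl
    have e : d - g + g = d := by omega
    rw [e] at q q'
    linarith
  have esu : permWalk x σ u = permWalk x σ' u := by
    have q := h5 (d - (u : ℕ)) le_rfl
    have q' := h5' (d - (u : ℕ)) le_rfl
    have e : (u : ℕ) + (d - (u : ℕ)) = d := by omega
    rw [e] at q q'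
    linarith
  have e3 : ∀ j, (u : ℕ) ≤ j → j ≤ d → permWalk x σ j = permWalk x σ' j := by
    intro j hj1 hj2
    have q := h5 (j - (u : ℕ)) (by omega)
    have q' := h5' (j - (u : ℕ)) (by omega)
    have e : (u : ℕ) + (j - (u : ℕ)) = j := by omega
    rw [e] at q q'
    linarith
  have e4 : ∀ j, g ≤ j → j ≤ (u : ℕ) → permWalk x σ j = permWalk x σ' j := by
    intro j hj1 hj2
    have q := h6 (j - g) (by omega)
    have q' := h6' (j - g) (by omega)
    have e : g + (j - g) = j := by omega
    rw [e] at q q'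
    linarith
  have e2 : ∀ j, d ≤ j → j ≤ n → permWalk x σ j = permWalk x σ' j := by
    intro j hj1 hj2
    have q := h8 (j - d) (by omega)
    have q' := h8' (j - d) (by omega)
    have e : d + (j - d) = j := by omega
    rw [e] at q q'
    linarith
  have hw : ∀ j, permWalk x σ j = permWalk x σ' j := by
    intro j
    by_cases hjn : j ≤ n
    · rcases le_or_gt j g with h | h
      · exact e1 j h
      rcases le_or_gt j (u : ℕ) with h2 | h2
      · exact e4 j (by omega) h2
      rcases le_or_gt j d with h3 | h3
      · exact e3 j (by omega) h3
      · exact e2 j (by omega) hjn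
    · rw [permWalk_large x σ (by omega), permWalk_large x σ' (by omega)]
  have hσ : σ = σ' := by
    apply Equiv.ext
    intro i
    apply hx
    have q1 : x (σ i) = permWalk x σ ((i : ℕ) + 1) - permWalk x σ i := by
      rw [permWalk_succ x σ i.isLt]; simp
    have q2 : x (σ' i) = permWalk x σ' ((i : ℕ) + 1) - permWalk x σ' i := by
      rw [permWalk_succ x σ' i.isLt]; simp
    rw [q1, q2, hw ((i : ℕ) + 1), hw (i : ℕ)]
  exact Prod.ext (Subtype.ext huv) hσ
end

section
/- Let (τ_n, ρ_n) satisfy the (τ,ρ) recursion: ρ_{n+1} = U_n ρ_n and τ_{n+1} = τ_n ρ_{n+1}² / (τ_n Z_{n+1}² + ρ_{n+1}²), where U_n are i.i.d. uniform on (0,1) and Z_n² are i.i.d. squares of standard normals, all independent of (τ_0, ρ_0) with τ_0, ρ_0 > 0 almost surely. Then τ_n → 0 and ρ_n → 0 almost surely as n → ∞. -/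
open MeasureTheory ProbabilityTheory Filter

/-- Index type for the independence hypothesis: the uniforms, the normals,
and the initial pair `(τ₀, ρ₀)`. -/
def tauRhoIdx : Type := ℕ ⊕ ℕ ⊕ Unit

/-- Codomains: each uniform and each normal is real-valued, the initial data is a pair. -/
def tauRhoVal : tauRhoIdx → Type
  | .inl _ => ℝ
  | .inr (.inl _) => ℝ
  | .inr (.inr _) => ℝ × ℝ

instance tauRhoValMeasurableSpace : ∀ i, MeasurableSpace (tauRhoVal i)
  | .inl _ => inferInstanceAs (MeasurableSpace ℝ)
  | .inr (.inl _) => inferInstanceAs (MeasurableSpace ℝ)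
  | .inr (.inr _) => inferInstanceAs (MeasurableSpace (ℝ × ℝ))

/-- The combined family of random variables for the independence hypothesis. -/
def tauRhoFam {Ω : Type*} (U Z : ℕ → Ω → ℝ) (τ ρ : ℕ → Ω → ℝ) :
    ∀ i : tauRhoIdx, Ω → tauRhoVal i
  | .inl n => U n
  | .inr (.inl n) => Z n
  | .inr (.inr _) => fun ω => (τ 0 ω, ρ 0 ω)

instance : DecidableEq tauRhoIdx := fun a b => (inferInstance : DecidableEq (ℕ ⊕ ℕ ⊕ Unit)) a b
/-- constant sets family for the U part -/
def setsU (A : Set ℝ) : ∀ i : tauRhoIdx, Set (tauRhoVal i)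
  | .inl _ => A
  | .inr (.inl _) => Set.univ
  | .inr (.inr _) => Set.univ

def setsZ (A : Set ℝ) : ∀ i : tauRhoIdx, Set (tauRhoVal i)
  | .inl _ => Set.univ
  | .inr (.inl _) => A
  | .inr (.inr _) => Set.univ

lemma helper_indep_U {Ω : Type*} [MeasurableSpace Ω] (P : Measure Ω)
    (U Z τ ρ : ℕ → Ω → ℝ) (hmU : ∀ n, Measurable (U n))
    (hindep : iIndepFun (tauRhoFam U Z τ ρ) P)
    (A : Set ℝ) (hA : MeasurableSet A) :
    iIndepSet (fun n => U n ⁻¹' A) P := by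
  rw [iIndepSet_iff_meas_biInter (fun n => (hmU n) hA)]
  intro S
  have hinj : Function.Injective (Sum.inl : ℕ → tauRhoIdx) := Sum.inl_injective
  have hmeas : ∀ i ∈ S.image Sum.inl,
      MeasurableSet[tauRhoValMeasurableSpace i] (setsU A i) := by
    rintro (n | n | u) _
    · exact hA
    · exact MeasurableSet.univ
    · exact MeasurableSet.univ
  have h := hindep.measure_inter_preimage_eq_mul (S.image Sum.inl) hmeas
  have h1 : ⋂ i ∈ (S.image Sum.inl : Finset tauRhoIdx), tauRhoFam U Z τ ρ i ⁻¹' setsU A i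
      = ⋂ n ∈ S, U n ⁻¹' A := by
    exact Finset.set_biInter_finset_image
  have h2 : ∏ i ∈ S.image Sum.inl, P (tauRhoFam U Z τ ρ i ⁻¹' setsU A i)
      = ∏ n ∈ S, P (U n ⁻¹' A) :=
    Finset.prod_image (fun _ _ _ _ h => hinj h)
  rw [h1] at h
  exact h.trans h2

lemma helper_indep_Z {Ω : Type*} [MeasurableSpace Ω] (P : Measure Ω)
    (U Z τ ρ : ℕ → Ω → ℝ) (hmZ : ∀ n, Measurable (Z n))
    (hindep : iIndepFun (tauRhoFam U Z τ ρ) P)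
    (A : Set ℝ) (hA : MeasurableSet A) :
    iIndepSet (fun n => Z (n + 1) ⁻¹' A) P := by
  rw [iIndepSet_iff_meas_biInter (fun n => (hmZ (n+1)) hA)]
  intro S
  have hinj : Function.Injective (fun n : ℕ => (Sum.inr (Sum.inl (n+1)) : tauRhoIdx)) := by
    intro a b h
    simpa using h
  have hmeas : ∀ i ∈ S.image (fun n : ℕ => (Sum.inr (Sum.inl (n+1)) : tauRhoIdx)),
      MeasurableSet[tauRhoValMeasurableSpace i] (setsZ A i) := by
    rintro (n | n | u) _
    · exact MeasurableSet.univ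
    · exact hA
    · exact MeasurableSet.univ
  have h := hindep.measure_inter_preimage_eq_mul
    (S.image (fun n : ℕ => (Sum.inr (Sum.inl (n+1)) : tauRhoIdx))) hmeas
  have h1 : ⋂ i ∈ (S.image (fun n : ℕ => (Sum.inr (Sum.inl (n+1)) : tauRhoIdx)) : Finset tauRhoIdx),
      tauRhoFam U Z τ ρ i ⁻¹' setsZ A i = ⋂ n ∈ S, Z (n+1) ⁻¹' A := by
    exact Finset.set_biInter_finset_image
  have h2 : ∏ i ∈ S.image (fun n : ℕ => (Sum.inr (Sum.inl (n+1)) : tauRhoIdx)),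
      P (tauRhoFam U Z τ ρ i ⁻¹' setsZ A i) = ∏ n ∈ S, P (Z (n+1) ⁻¹' A) :=
    Finset.prod_image (fun _ _ _ _ h => hinj h)
  rw [h1] at h
  exact h.trans h2

lemma gaussian_Ici_ne_zero : gaussianReal 0 1 (Set.Ici 1) ≠ 0 := by
  intro h
  rw [gaussianReal_apply 0 one_ne_zero] at h
  rw [lintegral_eq_zero_iff (measurable_gaussianPDF 0 1)] at h
  have h' : ∀ᵐ x ∂(volume.restrict (Set.Ici (1:ℝ))), False := by
    filter_upwards [h] with x hx
    exact absurd hx (gaussianPDF_pos 0 one_ne_zero x).ne'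
  have hbot : (volume.restrict (Set.Ici (1:ℝ))) = 0 :=
    ae_eq_bot.mp (Filter.eventually_false_iff_eq_bot.mp h')
  have : (volume.restrict (Set.Ici (1:ℝ))) (Set.Ici (1:ℝ)) = 0 := by rw [hbot]; rfl
  rw [Measure.restrict_apply_self, Real.volume_Ici] at this
  exact ENNReal.top_ne_zero this

/-- The `(τ, ρ)` recursion: `ρ_{n+1} = U_n ρ_n` and
`τ_{n+1} = τ_n ρ_{n+1}² / (τ_n Z_{n+1}² + ρ_{n+1}²)` with `U_n` i.i.d. uniform on
`(0,1)`, `Z_n` i.i.d. standard normal, all independent of the a.s. positive initial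
values `(τ₀, ρ₀)`.  Then `τ_n → 0` and `ρ_n → 0` almost surely. -/
theorem tau_rho_recursion_tendsto_zero
    {Ω : Type*} [MeasurableSpace Ω] (P : Measure Ω) [IsProbabilityMeasure P]
    (U Z τ ρ : ℕ → Ω → ℝ)
    (hmeasU : ∀ n, Measurable (U n)) (hmeasZ : ∀ n, Measurable (Z n))
    (hmeas0 : Measurable fun ω => (τ 0 ω, ρ 0 ω))
    (hindep : iIndepFun (tauRhoFam U Z τ ρ) P)
    (hU : ∀ n, Measure.map (U n) P = (volume : Measure ℝ).restrict (Set.Ioo 0 1))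
    (hZ : ∀ n, Measure.map (Z n) P = gaussianReal 0 1)
    (hpos : ∀ᵐ ω ∂P, 0 < τ 0 ω ∧ 0 < ρ 0 ω)
    (hρ : ∀ n ω, ρ (n + 1) ω = U n ω * ρ n ω)
    (hτ : ∀ n ω, τ (n + 1) ω
      = τ n ω * (ρ (n + 1) ω) ^ 2 / (τ n ω * (Z (n + 1) ω) ^ 2 + (ρ (n + 1) ω) ^ 2)) :
    ∀ᵐ ω ∂P, Tendsto (fun n => τ n ω) atTop (nhds 0)
      ∧ Tendsto (fun n => ρ n ω) atTop (nhds 0) := by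
  -- probabilities of the uniform events
  have hUmeasure : ∀ n (A : Set ℝ), MeasurableSet A →
      P (U n ⁻¹' A) = volume (A ∩ Set.Ioo 0 1) := by
    intro n A hA
    rw [← Measure.map_apply (hmeasU n) hA, hU n, Measure.restrict_apply hA]
  have hZmeasure : ∀ n (A : Set ℝ), MeasurableSet A →
      P (Z n ⁻¹' A) = gaussianReal 0 1 A := by
    intro n A hA
    rw [← Measure.map_apply (hmeasZ n) hA, hZ n]
  -- a.s. each `U n` lies in `(0,1)`
  have haeU : ∀ᵐ ω ∂P, ∀ n, U n ω ∈ Set.Ioo (0:ℝ) 1 := by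
    rw [ae_all_iff]
    intro n
    have h1 : P (U n ⁻¹' Set.Ioo 0 1) = 1 := by
      rw [hUmeasure n _ measurableSet_Ioo, Set.inter_self, Real.volume_Ioo]
      norm_num
    have := (prob_compl_eq_zero_iff ((hmeasU n) measurableSet_Ioo)).2 h1
    rw [ae_iff]
    exact this
  -- second Borel–Cantelli for the events `U n < 1/2`
  have hfreqU : ∀ᵐ ω ∂P, ∃ᶠ n in atTop, U n ω ∈ Set.Ioo (0:ℝ) (1/2) := by
    have hmeasSet : ∀ n, MeasurableSet (U n ⁻¹' Set.Ioo (0:ℝ) (1/2)) :=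
      fun n => (hmeasU n) measurableSet_Ioo
    have hindepS : iIndepSet (fun n => U n ⁻¹' Set.Ioo (0:ℝ) (1/2)) P :=
      helper_indep_U P U Z τ ρ hmeasU hindep _ measurableSet_Ioo
    have hsum : (∑' n, P (U n ⁻¹' Set.Ioo (0:ℝ) (1/2))) = ⊤ := by
      have hval : ∀ n, P (U n ⁻¹' Set.Ioo (0:ℝ) (1/2)) = ENNReal.ofReal (1/2) := by
        intro n
        rw [hUmeasure n _ measurableSet_Ioo,
          Set.inter_eq_self_of_subset_left (Set.Ioo_subset_Ioo le_rfl (by norm_num)),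
          Real.volume_Ioo]
        norm_num
      simp_rw [hval]
      exact ENNReal.tsum_const_eq_top_of_ne_zero (by simp)
    have hone := measure_limsup_eq_one hmeasSet hindepS hsum
    have := (prob_compl_eq_zero_iff (MeasurableSet.measurableSet_limsup hmeasSet)).2 hone
    rw [ae_iff]
    convert this using 2
    ext ω
    simp [Filter.mem_limsup_iff_frequently_mem]
  -- second Borel–Cantelli for the events `1 ≤ Z (n+1)`
  have hfreqZ : ∀ᵐ ω ∂P, ∃ᶠ n in atTop, 1 ≤ Z (n + 1) ω := by
    have hmeasSet : ∀ n, MeasurableSet (Z (n+1) ⁻¹' Set.Ici (1:ℝ)) :=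
      fun n => (hmeasZ (n+1)) measurableSet_Ici
    have hindepS : iIndepSet (fun n => Z (n+1) ⁻¹' Set.Ici (1:ℝ)) P :=
      helper_indep_Z P U Z τ ρ hmeasZ hindep _ measurableSet_Ici
    have hsum : (∑' n, P (Z (n+1) ⁻¹' Set.Ici (1:ℝ))) = ⊤ := by
      have hval : ∀ n, P (Z (n+1) ⁻¹' Set.Ici (1:ℝ)) = gaussianReal 0 1 (Set.Ici 1) :=
        fun n => hZmeasure (n+1) _ measurableSet_Ici
      simp_rw [hval]
      exact ENNReal.tsum_const_eq_top_of_ne_zero gaussian_Ici_ne_zero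
    have hone := measure_limsup_eq_one hmeasSet hindepS hsum
    have := (prob_compl_eq_zero_iff (MeasurableSet.measurableSet_limsup hmeasSet)).2 hone
    rw [ae_iff]
    convert this using 2
    ext ω
    simp [Filter.mem_limsup_iff_frequently_mem]
  -- deterministic part
  filter_upwards [hpos, haeU, hfreqU, hfreqZ] with ω hω0 hUmem hfU hfZ
  obtain ⟨hτ0, hρ0⟩ := hω0
  have hρpos : ∀ n, 0 < ρ n ω := by
    intro n
    induction n with
    | zero => exact hρ0
    | succ n ih => rw [hρ n ω]; exact mul_pos (hUmem n).1 ih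
  have hρlt : ∀ n, ρ (n + 1) ω < ρ n ω := by
    intro n
    rw [hρ n ω]
    nth_rewrite 2 [← one_mul (ρ n ω)]
    exact mul_lt_mul_of_pos_right (hUmem n).2 (hρpos n)
  have hden : ∀ n, 0 < τ n ω → 0 < τ n ω * Z (n + 1) ω ^ 2 + ρ (n + 1) ω ^ 2 := by
    intro n hn
    have h1 : (0:ℝ) ≤ τ n ω * Z (n + 1) ω ^ 2 := mul_nonneg hn.le (sq_nonneg _)
    nlinarith [pow_pos (hρpos (n+1)) 2]
  have hτpos : ∀ n, 0 < τ n ω := by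
    intro n
    induction n with
    | zero => exact hτ0
    | succ n ih =>
      rw [hτ n ω]
      exact div_pos (mul_pos ih (pow_pos (hρpos (n+1)) 2)) (hden n ih)
  have hτle : ∀ n, τ (n + 1) ω ≤ τ n ω := by
    intro n
    rw [hτ n ω, div_le_iff₀ (hden n (hτpos n))]
    nlinarith [sq_nonneg (τ n ω * Z (n + 1) ω)]
  -- ρ tends to its infimum L, and L = 0
  have hρanti : Antitone fun n => ρ n ω := antitone_nat_of_succ_le fun n => (hρlt n).le
  have hρbdd : BddBelow (Set.range fun n => ρ n ω) := by
    refine ⟨0, ?_⟩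
    rintro x ⟨n, rfl⟩
    exact (hρpos n).le
  set L := ⨅ n, ρ n ω with hLdef
  have hρtend : Tendsto (fun n => ρ n ω) atTop (nhds L) := tendsto_atTop_ciInf hρanti hρbdd
  have hL0 : 0 ≤ L := le_ciInf fun n => (hρpos n).le
  have hLle : ∀ n, L ≤ ρ n ω := fun n => ciInf_le hρbdd n
  have hLz : L = 0 := by
    by_contra h
    have hLpos : 0 < L := hL0.lt_of_ne (Ne.symm h)
    have hev : ∀ᶠ n in atTop, ρ n ω < 2 * L :=
      hρtend.eventually_lt_const (by linarith)
    obtain ⟨n, hn1, hn2⟩ := (hfU.and_eventually hev).exists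
    have hcontra : ρ (n + 1) ω < L := by
      rw [hρ n ω]
      nlinarith [hρpos n, hn1.1, hn1.2]
    exact absurd (hLle (n + 1)) (not_le.2 hcontra)
  rw [hLz] at hρtend
  -- τ tends to its infimum T, and T = 0
  have hτanti : Antitone fun n => τ n ω := antitone_nat_of_succ_le hτle
  have hτbdd : BddBelow (Set.range fun n => τ n ω) := by
    refine ⟨0, ?_⟩
    rintro x ⟨n, rfl⟩
    exact (hτpos n).le
  set T := ⨅ n, τ n ω with hTdef
  have hτtend : Tendsto (fun n => τ n ω) atTop (nhds T) := tendsto_atTop_ciInf hτanti hτbdd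
  have hT0 : 0 ≤ T := le_ciInf fun n => (hτpos n).le
  have hTle : ∀ n, T ≤ τ n ω := fun n => ciInf_le hτbdd n
  have hτb : ∀ n, 1 ≤ Z (n + 1) ω → τ (n + 1) ω ≤ ρ (n + 1) ω ^ 2 := by
    intro n hz
    rw [hτ n ω, div_le_iff₀ (hden n (hτpos n))]
    have hz2 : 1 ≤ Z (n + 1) ω ^ 2 := by nlinarith
    nlinarith [mul_nonneg (mul_nonneg (sq_nonneg (ρ (n + 1) ω)) (hτpos n).le)
      (sub_nonneg.2 hz2), sq_nonneg (ρ (n + 1) ω ^ 2)]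
  have hTz : T = 0 := by
    by_contra h
    have hTpos : 0 < T := hT0.lt_of_ne (Ne.symm h)
    have hρ2 : Tendsto (fun n => ρ (n + 1) ω ^ 2) atTop (nhds 0) := by
      have h1 : Tendsto (fun n => ρ (n + 1) ω) atTop (nhds 0) :=
        hρtend.comp (tendsto_add_atTop_nat 1)
      have := h1.pow 2
      simpa using this
    have hev : ∀ᶠ n in atTop, ρ (n + 1) ω ^ 2 < T := hρ2.eventually_lt_const hTpos
    obtain ⟨n, hz, hlt⟩ := (hfZ.and_eventually hev).exists
    exact absurd (hTle (n + 1)) (not_le.2 (lt_of_le_of_lt (hτb n hz) hlt))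
  rw [hTz] at hτtend
  exact ⟨hτtend, hρtend⟩
end
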